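/- Let ζ₀ satisfy ω_m(ζ₀) = 0, ζ₀ ∉ {z_{ν+1},…,z_λ}, and C_{ν+1} ≠ 0. Then for n ∈ Λ_m, V_{n+λ}(ζ₀) = z_{ν+1}^{n+λ}·D(ζ₀)·[C_{ν+1}/(ζ₀−z_{ν+1}) + o(1)] as n → ∞; in particular z_{ν+1}^{−(n+λ)}·V_{n+λ}(ζ₀) converges to D(ζ₀)·C_{ν+1}/(ζ₀−z_{ν+1}) ≠ 0, so V_{n+λ}(ζ₀) ≠ 0 for all sufficiently large n ∈ Λ_m. -/

import Mathlib

open Polynomial Finset Filter Topology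

/-- At an additional limit point `ζ₀` (a zero of `ω_m` distinct from the nondominant
poles), along `Λ_m` one has
`z_{ν+1}^{-(n+λ)} V_{n+λ}(ζ₀) → D(ζ₀)·C_{ν+1}/(ζ₀−z_{ν+1}) ≠ 0`,
hence `V_{n+λ}(ζ₀) ≠ 0` for all sufficiently large `n ∈ Λ_m`. -/
theorem stmt6 (lam nu sig mm : ℕ) (hnu1 : 1 < nu) (hnul : nu + 1 < lam)
    (hsig : nu ≤ sig) (hmm : mm < sig)
    (z Cc : Fin lam → ℂ) (hz : Function.Injective z)
    (hC : ∀ j, Cc j ≠ 0)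
    (hmod : ∀ j : Fin lam, (j : ℕ) < nu →
      ‖z j‖ = ‖z ⟨0, by omega⟩‖)
    (hroot : ∀ j : Fin lam, (j : ℕ) < nu → z j ^ sig = z ⟨0, by omega⟩ ^ sig)
    (hdrop : ∀ j : Fin lam, nu ≤ (j : ℕ) →
      ‖z j‖ < ‖z ⟨0, by omega⟩‖)
    (hdrop1 : ∀ j : Fin lam, nu + 1 ≤ (j : ℕ) →
      ‖z j‖ < ‖z ⟨nu, by omega⟩‖)
    (hdrop2 : ∀ j : Fin lam, nu + 1 ≤ (j : ℕ) →
      ‖z j‖ ≤ ‖z ⟨nu + 1, hnul⟩‖)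
    (ζ₀ : ℂ) (hζ : ∀ j : Fin lam, nu ≤ (j : ℕ) → ζ₀ ≠ z j) :
    let D : Polynomial ℂ := ∏ i, (Polynomial.X - Polynomial.C (z i))
    let Dj : Fin lam → Polynomial ℂ :=
      fun j => ∏ i ∈ Finset.univ.erase j, (Polynomial.X - Polynomial.C (z i))
    let V : ℕ → Polynomial ℂ := fun k => ∑ j, Polynomial.C (Cc j * z j ^ k) * Dj j
    let dom : Finset (Fin lam) := Finset.univ.filter (fun j => (j : ℕ) < nu)
    let ω : Polynomial ℂ := ∑ k ∈ dom, Polynomial.C (Cc k * z k ^ mm) *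
      ∏ i ∈ dom.erase k, (Polynomial.X - Polynomial.C (z i))
    let Λ : Filter ℕ := atTop ⊓ Filter.principal {n | (n + lam) % sig = mm % sig}
    ω.eval ζ₀ = 0 →
    (Tendsto (fun n : ℕ => (z ⟨nu, by omega⟩)⁻¹ ^ (n + lam) * (V (n + lam)).eval ζ₀)
        Λ (𝓝 (D.eval ζ₀ * Cc ⟨nu, by omega⟩ / (ζ₀ - z ⟨nu, by omega⟩))) ∧
      D.eval ζ₀ * Cc ⟨nu, by omega⟩ / (ζ₀ - z ⟨nu, by omega⟩) ≠ 0 ∧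
      ∀ᶠ n in Λ, (V (n + lam)).eval ζ₀ ≠ 0) := by
  intro D Dj V dom ω Λ hω
  set nu' : Fin lam := ⟨nu, by omega⟩ with hnu'def
  set z0 : Fin lam := ⟨0, by omega⟩ with hz0def
  set w : Fin lam → ℂ := fun i => ζ₀ - z i with hwdef
  set d : Fin lam → ℂ := fun j => ∏ i ∈ Finset.univ.erase j, w i with hddef
  have habs0 : 0 < ‖z z0‖ := by
    have := hdrop nu' (le_refl nu)
    exact lt_of_le_of_lt (norm_nonneg _) this
  have hznu : z nu' ≠ 0 := by
    have h := hdrop1 ⟨nu + 1, hnul⟩ (le_refl _)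
    intro hc
    rw [hc] at h
    simpa using lt_of_le_of_lt (norm_nonneg _) h
  have hwnu : w nu' ≠ 0 := sub_ne_zero.mpr (hζ nu' (le_refl nu))
  have hωeval : ω.eval ζ₀ = ∑ k ∈ dom, Cc k * z k ^ mm * ∏ i ∈ dom.erase k, w i := by
    simp [ω, eval_finset_sum, eval_prod, w]
  -- ζ₀ is distinct from all z j
  have hzall : ∀ j, ζ₀ ≠ z j := by
    intro j
    by_cases hj : (j : ℕ) < nu
    · intro he
      have hjd : j ∈ dom := by simp [dom, hj]
      have heq : ω.eval ζ₀ = Cc j * z j ^ mm * ∏ i ∈ dom.erase j, w i := by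
        rw [hωeval, Finset.sum_eq_single j]
        · intro k hk hkj
          have hjk : j ∈ dom.erase k := Finset.mem_erase.mpr ⟨hkj.symm, hjd⟩
          have hwz : w j = 0 := by simp [w, he]
          rw [Finset.prod_eq_zero hjk hwz, mul_zero]
        · intro h; exact absurd hjd h
      have hzj : z j ≠ 0 := by
        intro hc
        have h1 := hmod j hj
        rw [hc] at h1
        simp only [norm_zero] at h1
        exact absurd h1.symm (ne_of_gt habs0)
      have hprod : ∏ i ∈ dom.erase j, w i ≠ 0 := by
        refine Finset.prod_ne_zero_iff.mpr fun i hi => ?_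
        have hij : i ≠ j := (Finset.mem_erase.mp hi).1
        have hwi : w i = z j - z i := by rw [hwdef]; simp [he]
        rw [hwi]
        exact sub_ne_zero.mpr fun hc => hij ((hz hc).symm)
      rw [hω] at heq
      exact (mul_ne_zero (mul_ne_zero (hC j) (pow_ne_zero _ hzj)) hprod) heq.symm
    · exact hζ j (le_of_not_gt hj)
  have hwall : ∀ j, w j ≠ 0 := fun j => sub_ne_zero.mpr (hzall j)
  have hdnu : d nu' ≠ 0 := Finset.prod_ne_zero_iff.mpr fun i _ => hwall i
  have hDev : D.eval ζ₀ = w nu' * d nu' := by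
    have : D.eval ζ₀ = ∏ i, w i := by simp [D, eval_prod, w]
    rw [this, ← Finset.mul_prod_erase _ _ (Finset.mem_univ nu')]
  have hLval : D.eval ζ₀ * Cc nu' / (ζ₀ - z nu') = Cc nu' * d nu' := by
    rw [hDev]
    have : w nu' = ζ₀ - z nu' := rfl
    field_simp [← this, hwnu]
    ring
  have hLne : Cc nu' * d nu' ≠ 0 := mul_ne_zero (hC nu') hdnu
  -- the tail function
  set nd : Finset (Fin lam) := Finset.univ.filter (fun j => ¬ (j : ℕ) < nu) with hnddef
  set g : ℕ → ℂ := fun n => ∑ j ∈ nd, Cc j * (z j * (z nu')⁻¹) ^ (n + lam) * d j with hgdef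
  -- eventual equality along Λ
  have hVeval : ∀ k, (V k).eval ζ₀ = ∑ j, Cc j * z j ^ k * d j := by
    intro k; simp [V, Dj, eval_finset_sum, eval_prod, w, d]
  have hmemS : ∀ᶠ n in Λ, (n + lam) % sig = mm % sig :=
    eventually_inf_principal.mpr (Eventually.of_forall fun n h => h)
  have hmemT : ∀ᶠ n in Λ, mm ≤ n :=
    (eventually_ge_atTop mm).filter_mono inf_le_left
  have hev : ∀ᶠ n in Λ,
      (z nu')⁻¹ ^ (n + lam) * (V (n + lam)).eval ζ₀ = g n := by
    filter_upwards [hmemS, hmemT] with n hS hT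
    have hmmod : (n + lam) % sig = mm := by rwa [Nat.mod_eq_of_lt hmm] at hS
    obtain ⟨q, hq⟩ : ∃ q, n + lam = sig * q + mm :=
      ⟨(n + lam) / sig, by rw [← hmmod]; exact (Nat.div_add_mod _ _).symm⟩
    have hsplit : ∑ j, Cc j * z j ^ (n + lam) * d j
        = (∑ j ∈ dom, Cc j * z j ^ (n + lam) * d j)
          + ∑ j ∈ nd, Cc j * z j ^ (n + lam) * d j := by
      exact (Finset.sum_filter_add_sum_filter_not Finset.univ
        (fun j : Fin lam => (j : ℕ) < nu)
        (fun j : Fin lam => Cc j * z j ^ (n + lam) * d j)).symm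
    have hdomzero : ∑ j ∈ dom, Cc j * z j ^ (n + lam) * d j = 0 := by
      have hstep : ∀ j ∈ dom, Cc j * z j ^ (n + lam) * d j
          = ((z z0 ^ sig) ^ q * ∏ i ∈ nd, w i) *
            (Cc j * z j ^ mm * ∏ i ∈ dom.erase j, w i) := by
        intro j hj
        have hjlt : (j : ℕ) < nu := by simpa [dom] using hj
        have hpow : z j ^ (n + lam) = (z z0 ^ sig) ^ q * z j ^ mm := by
          rw [hq, pow_add, pow_mul, hroot j hjlt]
        have hdsplit : d j = (∏ i ∈ dom.erase j, w i) * ∏ i ∈ nd, w i := by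
          have hdis : Disjoint (dom.erase j) nd := by
            refine Finset.disjoint_left.mpr fun i hi hi' => ?_
            simp only [dom, nd, Finset.mem_erase, Finset.mem_filter] at hi hi'
            exact hi'.2 hi.2.2
          have hset : Finset.univ.erase j = (dom.erase j) ∪ nd := by
            ext i
            simp only [Finset.mem_erase, Finset.mem_union, Finset.mem_filter,
              Finset.mem_univ, true_and, and_true, dom, nd]
            constructor
            · intro hi
              by_cases hlt : (i : ℕ) < nu
              · exact Or.inl ⟨hi, hlt⟩
              · exact Or.inr hlt
            · rintro (⟨hi, _⟩ | hi)
              · exact hi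
              · intro hc; rw [hc] at hi; exact hi hjlt
          rw [show d j = ∏ i ∈ Finset.univ.erase j, w i from rfl, hset,
            Finset.prod_union hdis]
        rw [hpow, hdsplit]; ring
      rw [Finset.sum_congr rfl hstep, ← Finset.mul_sum, ← hωeval, hω, mul_zero]
    rw [hVeval, hsplit, hdomzero, zero_add, hgdef, Finset.mul_sum]
    refine Finset.sum_congr rfl fun j hj => ?_
    rw [mul_pow]
    ring
  -- limit of g
  have hgt : Tendsto g atTop (𝓝 (Cc nu' * d nu')) := by
    have hnu'mem : nu' ∈ nd := by simp [nd, hnu'def]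
    have hsum : ∑ j ∈ nd, (if j = nu' then Cc nu' * d nu' else 0) = Cc nu' * d nu' := by
      rw [Finset.sum_ite_eq' nd nu' (fun _ => Cc nu' * d nu')]
      simp [hnu'mem]
    rw [← hsum]
    refine tendsto_finset_sum _ fun j hj => ?_
    by_cases hje : j = nu'
    · rw [if_pos hje, hje]
      have heqf : (fun n : ℕ => Cc nu' * (z nu' * (z nu')⁻¹) ^ (n + lam) * d nu')
          = fun _ => Cc nu' * d nu' := by
        funext n
        rw [mul_inv_cancel₀ hznu, one_pow, mul_one]
      rw [heqf]
      exact tendsto_const_nhds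
    · simp only [if_neg hje]
      have hjge : nu + 1 ≤ (j : ℕ) := by
        have : ¬ (j : ℕ) < nu := by simpa [nd] using hj
        have : (j : ℕ) ≠ nu := fun hc => hje (Fin.ext hc)
        omega
      have hnorm : ‖z j * (z nu')⁻¹‖ < 1 := by
        have h1 := hdrop1 j hjge
        have h2 : 0 < ‖z nu'‖ := lt_of_le_of_lt (norm_nonneg _) h1
        rw [norm_mul, norm_inv,
          ← div_eq_mul_inv, div_lt_one h2]
        exact h1
      have h0 : Tendsto (fun n : ℕ => (z j * (z nu')⁻¹) ^ (n + lam)) atTop (𝓝 0) :=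
        (tendsto_pow_atTop_nhds_zero_of_norm_lt_one hnorm).comp
          (tendsto_add_atTop_nat lam)
      have := (h0.const_mul (Cc j)).mul_const (d j)
      simpa using this
  have hgtΛ : Tendsto g Λ (𝓝 (Cc nu' * d nu')) := hgt.mono_left inf_le_left
  have hmain : Tendsto (fun n : ℕ => (z nu')⁻¹ ^ (n + lam) * (V (n + lam)).eval ζ₀)
      Λ (𝓝 (Cc nu' * d nu')) := Tendsto.congr' (hev.mono fun n h => h.symm) hgtΛ
  refine ⟨by rw [hLval]; exact hmain, by rw [hLval]; exact hLne, ?_⟩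
  have hne := hmain.eventually_ne hLne
  filter_upwards [hne] with n hn hV0
  apply hn
  rw [hV0, mul_zero]
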